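/- Let G be a graph, let I₀ be a maximum independent set of G, and let I₁ be an independent set of the induced subgraph G[V∖I₀]. Then the bipartite graph induced between I₀ and I₁ (with edge set the edges of G joining I₀ to I₁) admits a matching saturating I₁. -/
import Mathlib

/-- A set of vertices is independent if no two of its vertices are adjacent. -/
def IsIndep {V : Type*} (G : SimpleGraph V) (s : Set V) : Prop :=
  ∀ u ∈ s, ∀ v ∈ s, ¬ G.Adj u v

/-- Lemma 2.2: If `I₀` is a maximum independent set of `G` and `I₁` is an independent
set of the induced subgraph `G[V ∖ I₀]`, then the bipartite graph between `I₀` and `I₁`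
admits a matching saturating `I₁` (given by an injective choice of `I₀`-neighbors). -/
theorem stmt_0 {V : Type*} [Fintype V] (G : SimpleGraph V)
    (I₀ I₁ : Set V)
    (hI₀ : IsIndep G I₀)
    (hmax : ∀ J : Set V, IsIndep G J → J.ncard ≤ I₀.ncard)
    (hI₁sub : I₁ ⊆ I₀ᶜ)
    (hI₁ : IsIndep G I₁) :
    ∃ f : V → V, Set.InjOn f I₁ ∧ ∀ x ∈ I₁, f x ∈ I₀ ∧ G.Adj x (f x) := by
  classical
  set t : ↥I₁ → Finset V := fun x => (G.neighborFinset x.1) ∩ I₀.toFinset with ht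
  have hall : ∀ s : Finset ↥I₁, s.card ≤ (s.biUnion t).card := by
    intro S
    by_contra hlt
    push_neg at hlt
    set N : Finset V := S.biUnion t with hN
    have hNsub : (↑N : Set V) ⊆ I₀ := by
      intro v hv
      simp only [hN, Finset.coe_biUnion, Set.mem_iUnion] at hv
      obtain ⟨x, _, hx⟩ := hv
      simp only [ht, Finset.coe_inter, Set.mem_inter_iff, Set.coe_toFinset] at hx
      exact hx.2
    set SV : Set V := Subtype.val '' (↑S : Set ↥I₁) with hSV
    have hSsub : SV ⊆ I₁ := by rintro v ⟨x, _, rfl⟩; exact x.2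
    set J : Set V := (I₀ \ ↑N) ∪ SV with hJ
    have hindep : IsIndep G J := by
      have key : ∀ u ∈ I₀ \ (↑N : Set V), ∀ v ∈ SV, ¬ G.Adj u v := by
        rintro u hu v hv hadj
        obtain ⟨x, hxS, rfl⟩ := hv
        apply hu.2
        simp only [hN, Finset.coe_biUnion, Set.mem_iUnion]
        refine ⟨x, by simpa using hxS, ?_⟩
        simp only [ht, Finset.coe_inter, Set.mem_inter_iff, Set.coe_toFinset,
          Finset.mem_coe, SimpleGraph.mem_neighborFinset]
        exact ⟨hadj.symm, hu.1⟩
      rintro u (hu | hu) v (hv | hv) hadj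
      · exact hI₀ u hu.1 v hv.1 hadj
      · exact key u hu v hv hadj
      · exact key v hv u hu hadj.symm
      · exact hI₁ u (hSsub hu) v (hSsub hv) hadj
    have hdisj : Disjoint (I₀ \ (↑N : Set V)) SV := by
      refine Set.disjoint_left.mpr ?_
      intro v hv hv'
      exact hI₁sub (hSsub hv') hv.1
    have hSVcard : SV.ncard = S.card := by
      rw [hSV, Set.ncard_image_of_injective _ Subtype.val_injective]
      simp [Set.ncard_coe_finset]
    have hfin : (I₀ \ (↑N : Set V)).Finite := Set.toFinite _
    have hI₀fin : I₀.Finite := Set.toFinite _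
    have hdiffcard : (I₀ \ (↑N : Set V)).ncard = I₀.ncard - N.card := by
      rw [Set.ncard_diff hNsub, Set.ncard_coe_finset]
    have hNle : N.card ≤ I₀.ncard := by
      rw [← Set.ncard_coe_finset]
      exact Set.ncard_le_ncard hNsub hI₀fin
    have hJcard : J.ncard = I₀.ncard - N.card + S.card := by
      rw [hJ, Set.ncard_union_eq hdisj (Set.toFinite _) (Set.toFinite _),
        hdiffcard, hSVcard]
    have := hmax J hindep
    rw [hJcard] at this
    omega
  obtain ⟨f, hfinj, hf⟩ := (Finset.all_card_le_biUnion_card_iff_exists_injective t).mp hall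
  refine ⟨fun v => if h : v ∈ I₁ then f ⟨v, h⟩ else v, ?_, ?_⟩
  · intro a ha b hb hab
    simp only [dif_pos ha, dif_pos hb] at hab
    exact congrArg Subtype.val (hfinj hab)
  · intro x hx
    simp only [dif_pos hx]
    have := hf ⟨x, hx⟩
    simp only [ht, Finset.mem_inter, SimpleGraph.mem_neighborFinset, Set.mem_toFinset] at this
    exact ⟨this.2, this.1⟩
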